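/- Let (X,d) be a Ptolemy metric space, σ ⊂ X a Ptolemy circle, and ω ∈ σ. Then in the inverted metric d_ω (with remote point ω), the set σ \ {ω} is a geodesic: for any three points x, y, z ∈ σ \ {ω} lying on σ in this order, d_ω(x,y) + d_ω(y,z) = d_ω(x,z). -/

import Mathlib

/-- If `σ` is a Ptolemy circle in a Ptolemy metric space `X` (given by a continuous
parameterization `γ` of period 1, injective on a period, satisfying the Ptolemy
equality on cyclically ordered quadruples) and `ω ∈ σ`, then in the inverted metric
`d_ω` the set `σ \ {ω}` is a geodesic: for `x, y, z ∈ σ \ {ω}` in order on `σ`,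
`d_ω(x,y) + d_ω(y,z) = d_ω(x,z)`. -/
theorem stmt_11 {X : Type*} [MetricSpace X]
    (hpt : ∀ x y z w : X, dist x y * dist z w ≤ dist x z * dist y w + dist x w * dist y z)
    (σ : Set X) (γ : ℝ → X)
    (hcont : Continuous γ) (hper : ∀ t, γ (t + 1) = γ t)
    (hinj : ∀ s t : ℝ, s ∈ Set.Ico (0:ℝ) 1 → t ∈ Set.Ico (0:ℝ) 1 → γ s = γ t → s = t)
    (hrange : Set.range γ = σ)
    (hcirc : ∀ t₁ t₂ t₃ t₄ : ℝ, t₁ ≤ t₂ → t₂ ≤ t₃ → t₃ ≤ t₄ → t₄ ≤ t₁ + 1 →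
      dist (γ t₁) (γ t₃) * dist (γ t₂) (γ t₄) =
        dist (γ t₁) (γ t₂) * dist (γ t₃) (γ t₄) + dist (γ t₁) (γ t₄) * dist (γ t₂) (γ t₃))
    (ω : X) (hω : ω ∈ σ) :
    ∀ t₀ t₁ t₂ t₃ : ℝ, γ t₀ = ω → t₀ ≤ t₁ → t₁ ≤ t₂ → t₂ ≤ t₃ → t₃ ≤ t₀ + 1 →
      γ t₁ ≠ ω → γ t₂ ≠ ω → γ t₃ ≠ ω →
      dist (γ t₁) (γ t₂) / (dist ω (γ t₁) * dist ω (γ t₂)) +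
        dist (γ t₂) (γ t₃) / (dist ω (γ t₂) * dist ω (γ t₃)) =
      dist (γ t₁) (γ t₃) / (dist ω (γ t₁) * dist ω (γ t₃)) := by
  intro t₀ t₁ t₂ t₃ h0 h01 h12 h23 h31 n1 n2 n3
  have key := hcirc t₀ t₁ t₂ t₃ h01 h12 h23 h31
  rw [h0] at key
  have d1 : dist ω (γ t₁) ≠ 0 := fun h => n1 (dist_eq_zero.mp h).symm
  have d2 : dist ω (γ t₂) ≠ 0 := fun h => n2 (dist_eq_zero.mp h).symm
  have d3 : dist ω (γ t₃) ≠ 0 := fun h => n3 (dist_eq_zero.mp h).symm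
  field_simp
  linear_combination -key
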